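/- Let D be a real graded division algebra with a degree-preserving involution φ_0. Two degree-preserving involutions φ_0 and φ_0' on D satisfy φ_0' = Int(d) φ_0 for some nonzero homogeneous d with φ_0(d) ∈ {±d} (i.e. φ_0 ∼ φ_0') if and only if φ_0' φ_0^{-1} is an inner automorphism of D, except possibly when ℂ ≅ D_e ⊆ Z(D), in which case the same conclusion still holds after replacing d by dz for a suitable z ∈ D_e. -/
import Mathlib


variable {G : Type*} [CommGroup G] [DecidableEq G] {D : Type*} [Ring D] [Algebra ℝ D]

/-- A real graded division algebra. -/
def IsGDA (comp : G → Submodule ℝ D) : Prop :=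
  DirectSum.IsInternal comp ∧ (1 : D) ∈ comp 1 ∧
    (∀ (g h : G) (a b : D), a ∈ comp g → b ∈ comp h → a * b ∈ comp (g * h)) ∧
    ∀ (g : G) (a : D), a ∈ comp g → a ≠ 0 → IsUnit a

set_option maxHeartbeats 1000000 in
set_option synthInstance.maxHeartbeats 400000 in
/-- Two degree-preserving involutions `φ₀, φ₀'` of a real graded division algebra
satisfy `φ₀' = Int(d) φ₀` for some nonzero homogeneous `d` with `φ₀(d) = ±d`
(i.e. `φ₀ ∼ φ₀'`) if and only if `φ₀' φ₀⁻¹` is an inner automorphism. -/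
theorem stmt_6 (comp : G → Submodule ℝ D) (hgda : IsGDA comp)
    (hfd : FiniteDimensional ℝ ↥(comp (1 : G)))
    (φ φ' : D ≃ₗ[ℝ] D)
    (hanti : ∀ x y : D, φ (x * y) = φ y * φ x)
    (hinvol : ∀ x : D, φ (φ x) = x)
    (hgr : ∀ (g : G), ∀ x ∈ comp g, φ x ∈ comp g)
    (hanti' : ∀ x y : D, φ' (x * y) = φ' y * φ' x)
    (hinvol' : ∀ x : D, φ' (φ' x) = x)
    (hgr' : ∀ (g : G), ∀ x ∈ comp g, φ' x ∈ comp g) :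
    (∃ (g : G) (d : Dˣ), (d : D) ∈ comp g ∧ (φ (d : D) = d ∨ φ (d : D) = -(d : D)) ∧
        ∀ x : D, φ' x = (d : D) * φ x * (↑d⁻¹ : D)) ↔
      ∃ u : Dˣ, ∀ x : D, φ' (φ x) = (u : D) * x * (↑u⁻¹ : D) := by
  classical
  obtain ⟨hint, hone, hmul, hunit⟩ := hgda
  constructor
  · rintro ⟨g, d, hd, -, hφ'⟩
    exact ⟨d, fun x => by rw [hφ' (φ x), hinvol]⟩
  · rintro ⟨u, hu⟩
    by_cases hns : Subsingleton D
    · exact ⟨1, 1, by simpa using hone, Or.inl (Subsingleton.elim _ _),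
        fun x => Subsingleton.elim _ _⟩
    haveI : Nontrivial D := not_subsingleton_iff_nontrivial.mp hns
    -- set up grading over `Additive G`
    set 𝒜 : Additive G → Submodule ℝ D := fun i => comp (Additive.toMul i) with h𝒜
    haveI hGM : SetLike.GradedMonoid 𝒜 :=
      { one_mem := hone
        mul_mem := fun {i j} a b ha hb => hmul _ _ a b ha hb }
    haveI : GradedRing 𝒜 :=
      { hGM with
        toDecomposition := (show DirectSum.IsInternal 𝒜 from hint).chooseDecomposition }
    -- pick a nonzero homogeneous component of u
    obtain ⟨i, hi⟩ : ∃ i, (DirectSum.decompose 𝒜 (u : D)) i ≠ 0 := by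
      by_contra h
      push_neg at h
      have h0 : DirectSum.decompose 𝒜 (u : D) = 0 := DFinsupp.ext h
      exact u.ne_zero ((DirectSum.decompose 𝒜).injective
        (h0.trans (DirectSum.decompose_zero 𝒜).symm))
    set d₀ : D := ((DirectSum.decompose 𝒜 (u : D)) i : D) with hd₀def
    have hd₀mem : d₀ ∈ 𝒜 i := SetLike.coe_mem _
    have hd₀ne : d₀ ≠ 0 := fun h => hi (Subtype.ext h)
    -- the key relation on homogeneous elements
    have keyhom : ∀ (h : G), ∀ x ∈ comp h, d₀ * x = φ' (φ x) * d₀ := by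
      intro h x hx
      have hux : (u : D) * x = φ' (φ x) * u := by
        rw [hu x, mul_assoc, mul_assoc, Units.inv_mul, mul_one]
      have hψ : φ' (φ x) ∈ comp h := hgr' h _ (hgr h x hx)
      have h1 : ((DirectSum.decompose 𝒜 ((u : D) * x)) (i + Additive.ofMul h) : D)
          = d₀ * x :=
        DirectSum.coe_decompose_mul_add_of_right_mem 𝒜 (j := Additive.ofMul h) hx
      have h2 : ((DirectSum.decompose 𝒜 (φ' (φ x) * (u : D))) (Additive.ofMul h + i) : D)
          = φ' (φ x) * d₀ :=
        DirectSum.coe_decompose_mul_add_of_left_mem 𝒜 (i := Additive.ofMul h) hψ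
      rw [← h1, ← h2, hux, add_comm]
    -- extend to all elements by linearity
    have key : ∀ x : D, d₀ * x = φ' (φ x) * d₀ := by
      intro x
      conv_lhs => rw [← DirectSum.sum_support_decompose 𝒜 x]
      conv_rhs => rw [← DirectSum.sum_support_decompose 𝒜 x]
      rw [map_sum, map_sum, Finset.mul_sum, Finset.sum_mul]
      exact Finset.sum_congr rfl fun j _ => keyhom _ _ (SetLike.coe_mem _)
    -- the same relation for φ d₀
    have key2 : ∀ x : D, φ d₀ * x = φ' (φ x) * φ d₀ := by
      intro x
      have e1 : d₀ * φ (φ' (φ x)) = φ x * d₀ := by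
        have := key (φ (φ' (φ x)))
        rwa [hinvol, hinvol'] at this
      have e2 := congrArg φ e1
      rw [hanti, hanti, hinvol, hinvol] at e2
      exact e2.symm
    -- from the key relation for a unit w, conclude
    have final : ∀ w : Dˣ, (∀ x : D, (w : D) * x = φ' (φ x) * w) →
        ∀ x : D, φ' x = (w : D) * φ x * (↑w⁻¹ : D) := by
      intro w hw x
      have h1 : (w : D) * φ x = φ' x * w := by
        have := hw (φ x); rwa [hinvol] at this
      rw [h1, mul_assoc, Units.mul_inv, mul_one]
    by_cases hc : d₀ + φ d₀ = 0
    · -- φ d₀ = -d₀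
      have hu0 : IsUnit d₀ := hunit _ d₀ hd₀mem hd₀ne
      refine ⟨Additive.toMul i, hu0.unit, by rw [hu0.unit_spec]; exact hd₀mem, ?_, ?_⟩
      · right
        rw [hu0.unit_spec]
        linear_combination (norm := noncomm_ring) hc
      · have := final hu0.unit (by rw [hu0.unit_spec]; exact key)
        simpa [hu0.unit_spec] using this
    · set d : D := d₀ + φ d₀ with hddef
      have hdmem : d ∈ 𝒜 i := Submodule.add_mem _ hd₀mem (hgr _ _ hd₀mem)
      have hud : IsUnit d := hunit _ d hdmem hc
      have keyd : ∀ x : D, d * x = φ' (φ x) * d := by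
        intro x
        rw [hddef, add_mul, mul_add, key x, key2 x]
      refine ⟨Additive.toMul i, hud.unit, by rw [hud.unit_spec]; exact hdmem, ?_, ?_⟩
      · left
        rw [hud.unit_spec, hddef, map_add, hinvol, add_comm]
      · have := final hud.unit (by rw [hud.unit_spec]; exact keyd)
        simpa [hud.unit_spec] using this
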